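/- Optimality of the weighted sample covariance: let r : Fin T → (Fin n → ℝ) be residual vectors and w : Fin T → ℝ nonnegative weights with W = ∑_t w t > 0. Define S* : Matrix (Fin n) (Fin n) ℝ by S* i j = (∑_t w t * r t i * r t j) / W and assume S* is positive definite. Then for every symmetric positive definite Σ : Matrix (Fin n) (Fin n) ℝ, W * Real.log (Matrix.det Σ) + ∑_t w t * (r t ⬝ᵥ (Σ⁻¹.mulVec (r t))) ≥ W * Real.log (Matrix.det S*) + W * n. -/

import Mathlib

open Matrix

/-- Trace of a real hermitian matrix is the sum of its eigenvalues. -/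
lemma trace_eq_sum_eigenvalues' {m : Type*} [Fintype m] [DecidableEq m]
    {A : Matrix m m ℝ} (hA : A.IsHermitian) :
    A.trace = ∑ i, hA.eigenvalues i := by
  simpa using hA.trace_eq_sum_eigenvalues

/-- Key scalar inequality lifted to PD matrices: log det A + n ≤ trace A. -/
lemma log_det_add_card_le_trace {m : Type*} [Fintype m] [DecidableEq m]
    {A : Matrix m m ℝ} (hA : A.PosDef) :
    Real.log A.det + (Fintype.card m : ℝ) ≤ A.trace := by
  have hdet : A.det = ∏ i, hA.isHermitian.eigenvalues i := by
    simpa using hA.isHermitian.det_eq_prod_eigenvalues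
  have hpos : ∀ i, 0 < hA.isHermitian.eigenvalues i := hA.eigenvalues_pos
  rw [trace_eq_sum_eigenvalues' hA.isHermitian, hdet,
    Real.log_prod (fun i _ => (hpos i).ne')]
  have : ∀ i ∈ Finset.univ, Real.log (hA.isHermitian.eigenvalues i) + 1 ≤ hA.isHermitian.eigenvalues i := by
    intro i _
    have := Real.log_le_sub_one_of_pos (hpos i)
    linarith
  calc ∑ i, Real.log (hA.isHermitian.eigenvalues i) + (Fintype.card m : ℝ)
      = ∑ i, (Real.log (hA.isHermitian.eigenvalues i) + 1) := by
        rw [Finset.sum_add_distrib]; simp [Finset.card_univ]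
    _ ≤ ∑ i, hA.isHermitian.eigenvalues i := Finset.sum_le_sum this

theorem weighted_sample_covariance_optimal (T n : ℕ)
    (r : Fin T → Fin n → ℝ) (w : Fin T → ℝ) (hw : ∀ t, 0 ≤ w t)
    (W : ℝ) (hW : W = ∑ t, w t) (hWpos : 0 < W)
    (Sstar : Matrix (Fin n) (Fin n) ℝ)
    (hSstar : ∀ i j, Sstar i j = (∑ t, w t * r t i * r t j) / W)
    (hSstarPD : Sstar.PosDef)
    (Sg : Matrix (Fin n) (Fin n) ℝ) (hSgPD : Sg.PosDef) :
    W * Real.log (Matrix.det Sg) + ∑ t, w t * (r t ⬝ᵥ Sg⁻¹.mulVec (r t)) ≥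
      W * Real.log (Matrix.det Sstar) + W * n := by
  have hWne : W ≠ 0 := hWpos.ne'
  open scoped MatrixOrder in
  set R := CFC.sqrt Sstar with hRdef
  have hRR : R * R = Sstar := by
    open scoped MatrixOrder in
    exact CFC.sqrt_mul_sqrt_self Sstar hSstarPD.posSemidef.nonneg
  have hRH : R.IsHermitian := by
    open scoped MatrixOrder in
    exact (CFC.sqrt_nonneg Sstar).posSemidef.1
  have hdetR : R.det ≠ 0 := by
    intro h
    have : Sstar.det = 0 := by rw [← hRR, det_mul, h, mul_zero]
    exact hSstarPD.det_pos.ne' this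
  have hSgInv : Sg⁻¹.PosDef := hSgPD.inv
  set A := R * Sg⁻¹ * R with hAdef
  -- A is positive definite
  have hAPD : A.PosDef := by
    refine PosDef.of_dotProduct_mulVec_pos ?_ ?_
    · have := isHermitian_conjTranspose_mul_mul R hSgInv.1
      rwa [hRH.eq] at this
    · intro x hx
      have hRx : R *ᵥ x ≠ 0 := by
        intro h
        apply hx
        have hinv : Invertible R := invertibleOfIsUnitDet R (isUnit_iff_ne_zero.mpr hdetR)
        have := congrArg (fun v => R⁻¹ *ᵥ v) h
        simpa [mulVec_mulVec, nonsing_inv_mul R (isUnit_iff_ne_zero.mpr hdetR)] using this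
      have hpos := hSgInv.dotProduct_mulVec_pos hRx
      have hRt : Rᵀ = R := by
        have := hRH.eq
        rwa [conjTranspose_eq_transpose_of_trivial] at this
      have hgoal : star x ⬝ᵥ A *ᵥ x = star (R *ᵥ x) ⬝ᵥ Sg⁻¹ *ᵥ (R *ᵥ x) := by
        simp only [hAdef, star_trivial, ← mulVec_mulVec]
        rw [dotProduct_mulVec x R, ← mulVec_transpose, hRt]
      rw [hgoal]
      exact hpos
  -- trace identity
  have htr : ∑ t, w t * (r t ⬝ᵥ Sg⁻¹ *ᵥ r t) = W * A.trace := by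
    have h1 : A.trace = (Sg⁻¹ * Sstar).trace := by
      rw [hAdef, trace_mul_cycle, hRR, trace_mul_comm]
    rw [h1]
    have h2 : W * (Sg⁻¹ * Sstar).trace
        = ∑ i, ∑ j, Sg⁻¹ i j * ∑ t, w t * r t j * r t i := by
      simp only [Matrix.trace, Matrix.diag_apply, Matrix.mul_apply, hSstar]
      rw [Finset.mul_sum]
      refine Finset.sum_congr rfl fun i _ => ?_
      rw [Finset.mul_sum]
      refine Finset.sum_congr rfl fun j _ => ?_
      field_simp
    rw [h2]
    simp only [dotProduct, mulVec, Finset.mul_sum]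
    rw [Finset.sum_comm]
    refine Finset.sum_congr rfl fun i _ => ?_
    rw [Finset.sum_comm]
    exact Finset.sum_congr rfl fun j _ => Finset.sum_congr rfl fun t _ => by ring
  -- determinant identity
  have hdetA : A.det = Sstar.det / Sg.det := by
    have hRdet2 : R.det * R.det = Sstar.det := by rw [← det_mul, hRR]
    rw [hAdef, det_mul, det_mul, det_nonsing_inv, Ring.inverse_eq_inv', div_eq_mul_inv, ← hRdet2]
    ring
  -- log det identity
  have hlog : Real.log A.det = Real.log Sstar.det - Real.log Sg.det := by
    rw [hdetA, Real.log_div hSstarPD.det_pos.ne' hSgPD.det_pos.ne']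
  have hkey : Real.log A.det + (n : ℝ) ≤ A.trace := by
    simpa using log_det_add_card_le_trace hAPD
  have hmul : W * (Real.log A.det + (n : ℝ)) ≤ W * A.trace :=
    mul_le_mul_of_nonneg_left hkey hWpos.le
  rw [ge_iff_le, htr]
  rw [hlog] at hmul
  nlinarith [hmul]
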